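/- Let F : ℝⁿ → Set ℝⁿ be upper semicontinuous with F(x) nonempty, compact, and convex for every x, let B : ℝⁿ → ℝ be continuously differentiable, and let D ⊆ ℝⁿ be a nonempty compact set such that ⟨∇B(x), η⟩ < 0 for every x ∈ D and every η ∈ F(x). Then there exists δ > 0 such that for every x ∈ D and every η ∈ conv(F(x + δ𝔹)) + δ𝔹 one has ⟨∇B(x), η⟩ < 0. -/

import Mathlib

open Metric Set Filter MeasureTheory
open scoped Pointwise RealInnerProductSpace Topology

variable {E : Type*} [NormedAddCommGroup E] [NormedSpace ℝ E]

/-- Admissible solution domains: `[0,T]`, `[0,T)`, or `[0,∞)`. -/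
def SolDomain (D : Set ℝ) : Prop :=
  (∃ T : ℝ, 0 ≤ T ∧ D = Set.Icc 0 T) ∨ (∃ T : ℝ, 0 < T ∧ D = Set.Ico 0 T) ∨ D = Set.Ici 0

/-- `φ` is a (locally absolutely continuous) solution of `ẋ ∈ F x` on `D`,
expressed in integral form: `φ t = φ 0 + ∫₀ᵗ v`, with `v t ∈ F (φ t)` a.e. on `D`. -/
def IsSolutionOn (F : E → Set E) (φ : ℝ → E) (D : Set ℝ) : Prop :=
  SolDomain D ∧ ∃ v : ℝ → E,
    (∀ t ∈ D, MeasureTheory.IntegrableOn v (Set.Icc 0 t)) ∧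
    (∀ t ∈ D, φ t = φ 0 + ∫ s in (0:ℝ)..t, v s) ∧
    (∀ᵐ t ∂(MeasureTheory.volume.restrict D), v t ∈ F (φ t))

/-- Safety: no solution starting in `Xo` ever reaches `Xu`. -/
def Safe (F : E → Set E) (Xo Xu : Set E) : Prop :=
  ∀ (φ : ℝ → E) (D : Set ℝ), IsSolutionOn F φ D → φ 0 ∈ Xo → ∀ t ∈ D, φ t ∉ Xu

/-- Forward invariance of `K`. -/
def ForwardInvariant (F : E → Set E) (K : Set E) : Prop :=
  ∀ (φ : ℝ → E) (D : Set ℝ), IsSolutionOn F φ D → φ 0 ∈ K → ∀ t ∈ D, φ t ∈ K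

/-- Image of a set under a set-valued map: `F(S) = ⋃_{y ∈ S} F(y)`. -/
def svImage (F : E → Set E) (S : Set E) : Set E := ⋃ y ∈ S, F y

/-- Right-hand side of the strongly perturbed system `Σ^s_ε`:
`conv (F (x + ε(x)𝔹)) + ε(x)𝔹`. -/
def strongPert (F : E → Set E) (ε : E → ℝ) (x : E) : Set E :=
  convexHull ℝ (svImage F (Metric.closedBall x (ε x))) + Metric.closedBall (0:E) (ε x)

/-- Right-hand side of the (ordinary) perturbed system `Σ_ε`: `F x + ε(x)𝔹`. -/
def pert (F : E → Set E) (ε : E → ℝ) (x : E) : Set E :=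
  F x + Metric.closedBall (0:E) (ε x)

def RobustlySafe (F : E → Set E) (Xo Xu : Set E) : Prop :=
  ∃ ε : E → ℝ, Continuous ε ∧ (∀ x, 0 < ε x) ∧ Safe (pert F ε) Xo Xu

def StronglyRobustlySafe (F : E → Set E) (Xo Xu : Set E) : Prop :=
  ∃ ε : E → ℝ, Continuous ε ∧ (∀ x, 0 < ε x) ∧ Safe (strongPert F ε) Xo Xu

def UniformlyStronglyRobustlySafe (F : E → Set E) (Xo Xu : Set E) : Prop :=
  ∃ ε : ℝ, 0 < ε ∧ Safe (strongPert F (fun _ => ε)) Xo Xu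

/-- Upper semicontinuity of a set-valued map. -/
def UpperSemicontinuousSV (F : E → Set E) : Prop :=
  ∀ x : E, ∀ U : Set E, IsOpen U → F x ⊆ U → ∀ᶠ y in nhds x, F y ⊆ U

/-- Lower semicontinuity of a set-valued map (sequential form). -/
def LowerSemicontinuousSV (F : E → Set E) : Prop :=
  ∀ x : E, ∀ y ∈ F x, ∀ u : ℕ → E, Filter.Tendsto u Filter.atTop (nhds x) →
    ∃ v : ℕ → E, (∀ i, v i ∈ F (u i)) ∧ Filter.Tendsto v Filter.atTop (nhds y)

/-- On a nonempty compact set `D` where `⟨∇B x, η⟩ < 0` for all `η ∈ F x`,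
there is `δ > 0` such that `⟨∇B x, η⟩ < 0` also for all `η ∈ conv(F(x + δ𝔹)) + δ𝔹`. -/
theorem stmt3 {n : ℕ} (F : EuclideanSpace ℝ (Fin n) → Set (EuclideanSpace ℝ (Fin n)))
    (hFusc : UpperSemicontinuousSV F)
    (hFne : ∀ x, (F x).Nonempty) (hFcpt : ∀ x, IsCompact (F x)) (hFcvx : ∀ x, Convex ℝ (F x))
    (B : EuclideanSpace ℝ (Fin n) → ℝ) (hB : ContDiff ℝ 1 B)
    (D : Set (EuclideanSpace ℝ (Fin n))) (hDne : D.Nonempty) (hDc : IsCompact D)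
    (hneg : ∀ x ∈ D, ∀ η ∈ F x, ⟪gradient B x, η⟫ < 0) :
    ∃ δ > (0:ℝ), ∀ x ∈ D, ∀ η ∈ strongPert F (fun _ => δ) x, ⟪gradient B x, η⟫ < 0 := by
  classical
  set g : EuclideanSpace ℝ (Fin n) → EuclideanSpace ℝ (Fin n) := gradient B with hg_def
  have hgcont : Continuous g := by
    have h1 : Continuous (fderiv ℝ B) := hB.continuous_fderiv one_ne_zero
    exact (InnerProductSpace.toDual ℝ _).symm.continuous.comp h1
  have key : ∀ x ∈ D, ∃ r > (0:ℝ), ∃ c > (0:ℝ), ∃ M > (0:ℝ),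
      (∀ y, dist y x < r → F y ⊆ {η | ⟪g x, η⟫ < -c} ∩ Metric.ball 0 M) ∧
      (∀ x', dist x' x < r → ‖g x' - g x‖ < c / (4 * M)) := by
    intro x hx
    obtain ⟨η₀, hη₀, hmax⟩ := (hFcpt x).exists_isMaxOn (hFne x)
      ((continuous_const.inner continuous_id :
        Continuous fun η : EuclideanSpace ℝ (Fin n) => ⟪g x, η⟫).continuousOn)
    have hmneg : ⟪g x, η₀⟫ < 0 := hneg x hx η₀ hη₀
    set c : ℝ := -⟪g x, η₀⟫ / 2 with hc
    have hcpos : 0 < c := by simp only [hc]; linarith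
    have hFlt : ∀ η ∈ F x, ⟪g x, η⟫ < -c := by
      intro η hη
      have h := hmax hη
      simp only [Set.mem_setOf_eq] at h
      simp only [hc]; linarith
    obtain ⟨M0, hM0⟩ := (hFcpt x).isBounded.subset_closedBall 0
    set M : ℝ := max M0 0 + 1 with hM
    have hMpos : (0:ℝ) < M := by positivity
    have hFball : F x ⊆ Metric.ball 0 M := by
      intro z hz
      have := hM0 hz
      simp only [Metric.mem_closedBall] at this
      simp only [Metric.mem_ball, hM]
      have : dist z 0 ≤ max M0 0 := le_trans this (le_max_left _ _)
      linarith
    have hUopen : IsOpen ({η | ⟪g x, η⟫ < -c} ∩ Metric.ball 0 M) := by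
      refine IsOpen.inter ?_ Metric.isOpen_ball
      exact isOpen_lt (continuous_const.inner continuous_id) continuous_const
    have hUsub : F x ⊆ {η | ⟪g x, η⟫ < -c} ∩ Metric.ball 0 M := fun η hη =>
      ⟨hFlt η hη, hFball hη⟩
    have hev := hFusc x _ hUopen hUsub
    rw [Metric.eventually_nhds_iff] at hev
    obtain ⟨r1, hr1, hU⟩ := hev
    have hcm : (0:ℝ) < c / (4 * M) := by positivity
    have hcg := Metric.continuousAt_iff.mp (hgcont.continuousAt (x := x)) (c / (4 * M)) hcm
    obtain ⟨r2, hr2, hG⟩ := hcg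
    refine ⟨min r1 r2, lt_min hr1 hr2, c, hcpos, M, hMpos, ?_, ?_⟩
    · intro y hy; exact hU (lt_of_lt_of_le hy (min_le_left _ _))
    · intro x' hx'
      have := hG (lt_of_lt_of_le hx' (min_le_right _ _))
      rwa [dist_eq_norm] at this
  choose! r hr c hc M hM hU hgr using key
  obtain ⟨t, htD, hcov⟩ := hDc.elim_nhds_subcover (fun x => Metric.ball x (r x / 4))
    (fun x hx => Metric.ball_mem_nhds _ (by have := hr x hx; positivity))
  have htne : t.Nonempty := by
    obtain ⟨x, hx⟩ := hDne
    have := hcov hx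
    simp only [Set.mem_iUnion] at this
    obtain ⟨i, hi, _⟩ := this
    exact ⟨i, hi⟩
  set δ : ℝ := t.inf' htne (fun i => min (r i / 4)
    (c i / (4 * (‖g i‖ + c i / (4 * M i) + 1)))) with hδ_def
  have hδpos : 0 < δ := by
    rw [hδ_def, Finset.lt_inf'_iff]
    intro i hi
    have hri := hr i (htD i hi)
    have hci := hc i (htD i hi)
    have hMi := hM i (htD i hi)
    have h1 : (0:ℝ) < ‖g i‖ + c i / (4 * M i) + 1 := by positivity
    exact lt_min (by positivity) (by positivity)
  refine ⟨δ, hδpos, ?_⟩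
  intro x hx η hη
  have hxcov := hcov hx
  simp only [Set.mem_iUnion] at hxcov
  obtain ⟨i, hit, hxi⟩ := hxcov
  have hiD := htD i hit
  have hri := hr i hiD
  have hci := hc i hiD
  have hMi := hM i hiD
  rw [Metric.mem_ball] at hxi
  have hδle : δ ≤ min (r i / 4) (c i / (4 * (‖g i‖ + c i / (4 * M i) + 1))) :=
    Finset.inf'_le _ hit
  have hδr : δ ≤ r i / 4 := hδle.trans (min_le_left _ _)
  have hδc : δ ≤ c i / (4 * (‖g i‖ + c i / (4 * M i) + 1)) :=
    hδle.trans (min_le_right _ _)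
  -- decompose η
  rw [strongPert, Set.mem_add] at hη
  obtain ⟨a, ha, b, hb, hab⟩ := hη
  rw [Metric.mem_closedBall, dist_zero_right] at hb
  -- conv hull inside U i
  have hsv : svImage F (Metric.closedBall x δ) ⊆ {η | ⟪g i, η⟫ < -c i} ∩ Metric.ball 0 (M i) := by
    intro z hz
    rw [svImage, Set.mem_iUnion₂] at hz
    obtain ⟨y, hy, hzy⟩ := hz
    rw [Metric.mem_closedBall] at hy
    have hdyi : dist y i < r i := by
      calc dist y i ≤ dist y x + dist x i := dist_triangle _ _ _
        _ < r i := by linarith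
    exact hU i hiD y hdyi hzy
  have hUcvx : Convex ℝ ({η | ⟪g i, η⟫ < -c i} ∩ Metric.ball 0 (M i)) := by
    refine Convex.inter ?_ (convex_ball _ _)
    exact convex_halfSpace_lt ⟨fun u v => inner_add_right _ _ _,
      fun s u => real_inner_smul_right _ _ _⟩ _
  have haU : a ∈ {η | ⟪g i, η⟫ < -c i} ∩ Metric.ball 0 (M i) :=
    convexHull_min hsv hUcvx ha
  obtain ⟨h1, h2⟩ := haU
  rw [Metric.mem_ball, dist_zero_right] at h2
  have h1' : ⟪g i, a⟫ < -c i := h1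
  have h3 : ‖g x - g i‖ < c i / (4 * M i) := hgr i hiD x (by linarith)
  have h5 : ‖g x‖ ≤ ‖g i‖ + c i / (4 * M i) := by
    have := norm_sub_norm_le (g x) (g i)
    linarith
  -- estimates
  have e1 : ⟪g x - g i, a⟫ ≤ c i / 4 := by
    calc ⟪g x - g i, a⟫ ≤ ‖g x - g i‖ * ‖a‖ := real_inner_le_norm _ _
      _ ≤ (c i / (4 * M i)) * M i := by
          apply mul_le_mul h3.le h2.le (norm_nonneg _) (by positivity)
      _ = c i / 4 := by field_simp
  have e2 : ⟪g x, b⟫ ≤ c i / 4 := by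
    have hK : (0:ℝ) < ‖g i‖ + c i / (4 * M i) + 1 := by positivity
    calc ⟪g x, b⟫ ≤ ‖g x‖ * ‖b‖ := real_inner_le_norm _ _
      _ ≤ (‖g i‖ + c i / (4 * M i) + 1) * δ := by
          apply mul_le_mul (by linarith) hb (norm_nonneg _) (by positivity)
      _ ≤ (‖g i‖ + c i / (4 * M i) + 1) * (c i / (4 * (‖g i‖ + c i / (4 * M i) + 1))) :=
          mul_le_mul_of_nonneg_left hδc (le_of_lt hK)
      _ = c i / 4 := by field_simp
  have hsplit : ⟪g x, η⟫ = ⟪g i, a⟫ + ⟪g x - g i, a⟫ + ⟪g x, b⟫ := by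
    rw [← hab, inner_add_right, inner_sub_left]; ring
  rw [hsplit]
  linarith
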